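/- If f : ℝ → ℝ is a twice differentiable positive function with f(0) = a > 0, f'(0) = 0, satisfying f·(4+f²)·f'' = 4·(1+f'²), then for all t, (f(t)²+4)·(1+f'(t)²)/f(t)² = (a²+4)/a². -/

import Mathlib

theorem stmt_1 (a : ℝ) (ha : 0 < a) (f : ℝ → ℝ)
    (hpos : ∀ t, 0 < f t) (hf : Differentiable ℝ f) (hf' : Differentiable ℝ (deriv f))
    (h0 : f 0 = a) (h0' : deriv f 0 = 0)
    (hode : ∀ t, f t * (4 + f t ^ 2) * deriv (deriv f) t = 4 * (1 + (deriv f t) ^ 2)) :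
    ∀ t : ℝ, (f t ^ 2 + 4) * (1 + (deriv f t) ^ 2) / f t ^ 2 = (a ^ 2 + 4) / a ^ 2 := by
  set G : ℝ → ℝ := fun t => (f t ^ 2 + 4) * (1 + (deriv f t) ^ 2) / f t ^ 2 with hG
  have key : ∀ t, HasDerivAt G 0 t := by
    intro t
    have hft : HasDerivAt f (deriv f t) t := (hf t).hasDerivAt
    have hft' : HasDerivAt (deriv f) (deriv (deriv f) t) t := (hf' t).hasDerivAt
    have hnum : HasDerivAt (fun s => (f s ^ 2 + 4) * (1 + (deriv f s) ^ 2))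
        ((2 * f t * deriv f t) * (1 + (deriv f t) ^ 2)
          + (f t ^ 2 + 4) * (2 * deriv f t * deriv (deriv f) t)) t := by
      have h1 : HasDerivAt (fun s => f s ^ 2 + 4) (2 * f t * deriv f t) t := by
        have := (hft.pow 2).add_const 4
        simpa [mul_comm, mul_assoc, mul_left_comm] using this
      have h2 : HasDerivAt (fun s => 1 + (deriv f s) ^ 2)
          (2 * deriv f t * deriv (deriv f) t) t := by
        have := (hft'.pow 2).const_add 1
        simpa [mul_comm, mul_assoc, mul_left_comm] using this
      simpa using h1.fun_mul h2
    have hden : HasDerivAt (fun s => f s ^ 2) (2 * f t * deriv f t) t := by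
      have := hft.fun_pow 2
      simpa [mul_comm, mul_assoc, mul_left_comm] using this
    have hfne : f t ≠ 0 := (hpos t).ne'
    have hdenne : f t ^ 2 ≠ 0 := pow_ne_zero 2 hfne
    have hdiv := hnum.div hden hdenne
    have hzero : (((2 * f t * deriv f t) * (1 + (deriv f t) ^ 2)
          + (f t ^ 2 + 4) * (2 * deriv f t * deriv (deriv f) t)) * f t ^ 2
        - (f t ^ 2 + 4) * (1 + (deriv f t) ^ 2) * (2 * f t * deriv f t)) / (f t ^ 2) ^ 2
        = 0 := by
      rw [div_eq_zero_iff]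
      left
      linear_combination 2 * f t * deriv f t * (hode t)
    rw [hzero] at hdiv
    exact hdiv
  intro t
  have hconst : G t = G 0 :=
    is_const_of_deriv_eq_zero (fun x => (key x).differentiableAt) (fun x => (key x).deriv) t 0
  have : G 0 = (a ^ 2 + 4) / a ^ 2 := by
    simp [hG, h0, h0']
  simpa [hG] using hconst.trans this
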